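/- Let n, p, q, k be positive integers with p ≤ k, and let f_1, …, f_p, g_1, …, g_q : ℂⁿ → ℂ be entire holomorphic functions. Define R : ℂⁿ × ℂⁿ → ℂ by R(z,w) = Σ_{i=1}^p f_i(z)·conj(f_i(w)) − Σ_{j=1}^q g_j(z)·conj(g_j(w)). If R ∈ 𝒫_k(ℂⁿ), then R ∈ 𝒫_N(ℂⁿ) for every positive integer N. -/

import Mathlib

open Complex Filter Set Metric
open scoped Topology


open scoped ComplexOrder

/-- `R ∈ 𝒫_N(ℂⁿ)`: for all points `z_1, …, z_N ∈ ℂⁿ` and scalars `a_1, …, a_N ∈ ℂ`,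
the sum `Σ_{i,j} R(z_i, z_j) a_i conj(a_j)` is a nonnegative real number. -/
def InP {M : Type*} (N : ℕ) (R : M × M → ℂ) : Prop :=
  ∀ (z : Fin N → M) (a : Fin N → ℂ),
    0 ≤ ∑ i, ∑ j, R (z i, z j) * a i * (starRingEnd ℂ) (a j)

lemma entire_ratio {f g : ℂ → ℂ} (hf : Differentiable ℂ f) (hg : Differentiable ℂ g)
    (hle : ∀ t, ‖g t‖ ≤ ‖f t‖) (z w : ℂ) :
    g z * f w = g w * f z := by
  by_cases hzero : ∀ t, f t = 0
  · have hg0 : ∀ t, g t = 0 := by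
      intro t
      have := hle t
      rw [hzero t] at this
      simp only [norm_zero] at this
      exact norm_eq_zero.mp (le_antisymm this (norm_nonneg _))
    simp [hg0]
  push_neg at hzero
  obtain ⟨w₀, hw₀⟩ := hzero
  -- zeros of f are isolated
  have hner : ∀ c : ℂ, f c = 0 → ∀ᶠ x in 𝓝[≠] c, f x ≠ 0 := by
    intro c hc
    rcases (hf.analyticAt c).eventually_eq_zero_or_eventually_ne_zero with h | h
    · exfalso
      have hA : AnalyticOnNhd ℂ f Set.univ := fun x _ => hf.analyticAt x
      have := hA.eqOn_zero_of_preconnected_of_eventuallyEq_zero isPreconnected_univ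
        (Set.mem_univ c) h (Set.mem_univ w₀)
      exact hw₀ this
    · exact h
  set q : ℂ → ℂ := fun t => if f t = 0 then limUnder (𝓝[≠] t) (fun s => g s / f s)
    else g t / f t with hq
  have hopen : IsOpen {x : ℂ | f x ≠ 0} := isOpen_ne.preimage hf.continuous
  have hq_on : ∀ x, f x ≠ 0 → q x = g x / f x := by
    intro x hx; simp only [hq, if_neg hx]
  have hqd : Differentiable ℂ q := by
    intro c
    by_cases hc : f c = 0
    · obtain ⟨t, ht, htc⟩ := (eventually_nhdsWithin_iff.mp (hner c hc)).exists_mem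
      have hd : DifferentiableOn ℂ (fun s => g s / f s) (t \ {c}) := fun x hx =>
        ((hg x).div (hf x) (htc x hx.1 hx.2)).differentiableWithinAt
      have hb : BddAbove (norm ∘ (fun s => g s / f s) '' (t \ {c})) := by
        refine ⟨1, ?_⟩
        rintro y ⟨x, hx, rfl⟩
        have hfx := htc x hx.1 hx.2
        simp only [Function.comp_apply, norm_div]
        exact div_le_one_of_le₀ (hle x) (norm_nonneg _)
      have hupd := differentiableOn_update_limUnder_of_bddAbove ht hd hb
      have hat : DifferentiableAt ℂ
          (Function.update (fun s => g s / f s) c (limUnder (𝓝[≠] c) fun s => g s / f s)) c :=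
        hupd.differentiableAt ht
      refine hat.congr_of_eventuallyEq ?_
      filter_upwards [ht] with x hx
      by_cases hxc : x = c
      · subst hxc
        simp [hq, hc]
      · rw [Function.update_of_ne hxc, hq_on x (htc x hx hxc)]
    · have hev : q =ᶠ[𝓝 c] fun x => g x / f x := by
        filter_upwards [hopen.mem_nhds hc] with x hx using hq_on x hx
      exact (((hg c).div (hf c) hc).congr_of_eventuallyEq hev : DifferentiableAt ℂ q c)
  have hg0 : ∀ x, f x = 0 → g x = 0 := by
    intro x hx
    have := hle x
    rw [hx, norm_zero] at this
    exact norm_eq_zero.mp (le_antisymm this (norm_nonneg _))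
  have hbd : ∀ x, ‖q x‖ ≤ 1 := by
    have hsub : {x : ℂ | f x ≠ 0} ⊆ {x | ‖q x‖ ≤ 1} := by
      intro x hx
      simp only [Set.mem_setOf_eq] at hx ⊢
      rw [hq_on x hx, norm_div]
      exact div_le_one_of_le₀ (hle x) (norm_nonneg _)
    have hclosed : IsClosed {x : ℂ | ‖q x‖ ≤ 1} :=
      isClosed_le (continuous_norm.comp hqd.continuous) continuous_const
    have hdense : ∀ x : ℂ, x ∈ closure {x : ℂ | f x ≠ 0} := by
      intro x
      by_cases hx : f x = 0
      · rw [mem_closure_iff_frequently]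
        exact ((hner x hx).frequently).filter_mono nhdsWithin_le_nhds
      · exact subset_closure hx
    intro x
    exact hclosed.closure_subset_iff.mpr hsub (hdense x)
  have hrange : Bornology.IsBounded (Set.range q) := by
    rw [isBounded_iff_forall_norm_le]
    refine ⟨1, ?_⟩
    rintro y ⟨x, rfl⟩
    simpa using hbd x
  have hconst : ∀ x, q x = q w₀ := fun x => hqd.apply_eq_apply_of_bounded hrange x w₀
  have hfac : ∀ t, g t = q t * f t := by
    intro t
    by_cases hft : f t = 0
    · simp [hg0 t hft, hft]
    · rw [hq_on t hft]
      field_simp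
  calc g z * f w = (q z * f z) * f w := by rw [← hfac]
    _ = (q w * f w) * f z := by rw [hconst z, hconst w]; ring
    _ = g w * f z := by rw [← hfac]

lemma entire_ratio_pi {n : ℕ} {f g : (Fin n → ℂ) → ℂ} (hf : Differentiable ℂ f)
    (hg : Differentiable ℂ g) (hle : ∀ t, ‖g t‖ ≤ ‖f t‖)
    (z w : Fin n → ℂ) : g z * f w = g w * f z := by
  have hφ : Differentiable ℂ (fun t : ℂ => w + t • (z - w)) :=
    (differentiable_id.smul_const _).const_add _
  have h := entire_ratio (hf.comp hφ) (hg.comp hφ) (fun t => hle _) 1 0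
  simpa [one_smul, zero_smul, add_sub_cancel] using h

lemma point_bound {n p k : ℕ} (hk : 0 < k) (f : Fin p → (Fin n → ℂ) → ℂ)
    (g : (Fin n → ℂ) → ℂ)
    (H : ∀ (z : Fin k → (Fin n → ℂ)) (a : Fin k → ℂ),
      Complex.normSq (∑ i, a i * g (z i)) ≤ ∑ l, Complex.normSq (∑ i, a i * f l (z i)))
    (z₀ : Fin n → ℂ) :
    Complex.normSq (g z₀) ≤ ∑ l, Complex.normSq (f l z₀) := by
  have h := H (fun _ => z₀) (fun i => if i = ⟨0, hk⟩ then 1 else 0)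
  simpa [ite_mul, Finset.sum_ite_eq'] using h

lemma club {n : ℕ} (p : ℕ) : ∀ (k : ℕ), 0 < k → p ≤ k →
    ∀ (f : Fin p → (Fin n → ℂ) → ℂ) (g : (Fin n → ℂ) → ℂ),
    (∀ l, Differentiable ℂ (f l)) → Differentiable ℂ g →
    (∀ (z : Fin k → (Fin n → ℂ)) (a : Fin k → ℂ),
      Complex.normSq (∑ i, a i * g (z i)) ≤ ∑ l, Complex.normSq (∑ i, a i * f l (z i))) →
    ∀ (N : ℕ) (z : Fin N → (Fin n → ℂ)) (a : Fin N → ℂ),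
      (∀ l, ∑ i, a i * f l (z i) = 0) → ∑ i, a i * g (z i) = 0 := by
  induction p with
  | zero =>
    intro k hk _ f g hf hg H N z a _
    have hg0 : ∀ t, g t = 0 := by
      intro t
      have := point_bound hk f g H t
      simp only [Finset.univ_eq_empty, Finset.sum_empty] at this
      exact Complex.normSq_eq_zero.mp (le_antisymm this (Complex.normSq_nonneg _))
    simp [hg0]
  | succ p IH =>
    intro k hk hpk f g hf hg H N z a hrel
    by_cases hex : ∃ (w₁ : Fin n → ℂ) (l₀ : Fin (p + 1)), f l₀ w₁ ≠ 0
    · obtain ⟨w₁, l₀, hw₁⟩ := hex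
      rcases Nat.lt_or_ge k 2 with hk2 | hk2
      · -- k = 1, hence p = 0 : the analytic base case
        have hk1 : k = 1 := by omega
        subst hk1
        have hp0 : p = 0 := by omega
        subst hp0
        have hl₀ : l₀ = 0 := Fin.eq_zero l₀
        rw [hl₀] at hw₁
        have hpt : ∀ t, ‖g t‖ ≤ ‖f 0 t‖ := by
          intro t
          have h1 := point_bound hk f g H t
          have h2 : ∑ l, Complex.normSq (f l t) = Complex.normSq (f 0 t) := by
            simp [Fin.sum_univ_one]
          rw [h2] at h1
          rw [Complex.norm_def, Complex.norm_def]
          exact Real.sqrt_le_sqrt h1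
        have key := fun zz => entire_ratio_pi (hf 0) hg hpt zz w₁
        have hmul : (∑ i, a i * g (z i)) * f 0 w₁ = g w₁ * ∑ i, a i * f 0 (z i) := by
          rw [Finset.sum_mul, Finset.mul_sum]
          refine Finset.sum_congr rfl fun i _ => ?_
          have := key (z i)
          calc a i * g (z i) * f 0 w₁ = a i * (g (z i) * f 0 w₁) := by ring
            _ = a i * (g w₁ * f 0 (z i)) := by rw [this]
            _ = g w₁ * (a i * f 0 (z i)) := by ring
        rw [hrel 0, mul_zero] at hmul
        exact (mul_eq_zero.mp hmul).resolve_right hw₁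
      · -- descent step
        obtain ⟨k', rfl⟩ : ∃ k', k = k' + 1 := ⟨k - 1, by omega⟩
        set α : (Fin n → ℂ) → ℂ := fun t => f l₀ t / f l₀ w₁ with hα
        have hαd : Differentiable ℂ α := by rw [hα]; simp only [div_eq_mul_inv]; exact (hf l₀).mul_const _
        have hαkey : ∀ t, f l₀ t - α t * f l₀ w₁ = 0 := by
          intro t
          rw [hα]
          field_simp
          ring
        set f' : Fin p → (Fin n → ℂ) → ℂ :=
          fun l t => f (l₀.succAbove l) t - α t * f (l₀.succAbove l) w₁ with hf'
        set g' : (Fin n → ℂ) → ℂ := fun t => g t - α t * g w₁ with hg'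
        have hf'd : ∀ l, Differentiable ℂ (f' l) := fun l => (hf _).sub (hαd.mul_const _)
        have hg'd : Differentiable ℂ g' := hg.sub (hαd.mul_const _)
        have hcomb : ∀ (m : ℕ) (zz : Fin m → (Fin n → ℂ)) (aa : Fin m → ℂ)
            (h : (Fin n → ℂ) → ℂ) (c : ℂ),
            ∑ i, aa i * (h (zz i) - α (zz i) * c)
              = (∑ i, aa i * h (zz i)) - (∑ i, aa i * α (zz i)) * c := by
          intro m zz aa h c
          rw [Finset.sum_mul, ← Finset.sum_sub_distrib]
          exact Finset.sum_congr rfl fun i _ => by ring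
        have H' : ∀ (zz : Fin k' → (Fin n → ℂ)) (aa : Fin k' → ℂ),
            Complex.normSq (∑ i, aa i * g' (zz i))
              ≤ ∑ l, Complex.normSq (∑ i, aa i * f' l (zz i)) := by
          intro zz aa
          set b : ℂ := -∑ i, aa i * α (zz i) with hb
          have hsum : ∀ h : (Fin n → ℂ) → ℂ,
              ∑ i : Fin (k' + 1), (Fin.snoc aa b : Fin (k' + 1) → ℂ) i * h ((Fin.snoc zz w₁ : Fin (k' + 1) → (Fin n → ℂ)) i)
                = (∑ i, aa i * h (zz i)) + b * h w₁ := by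
            intro h
            rw [Fin.sum_univ_castSucc]
            simp
          have hmain := H (Fin.snoc zz w₁) (Fin.snoc aa b)
          rw [Fin.sum_univ_succAbove _ l₀] at hmain
          have hzero : ∑ i : Fin (k' + 1), (Fin.snoc aa b : Fin (k' + 1) → ℂ) i * f l₀ ((Fin.snoc zz w₁ : Fin (k' + 1) → (Fin n → ℂ)) i) = 0 := by
            rw [hsum (f l₀), hb]
            have : ∑ i, aa i * f l₀ (zz i) - (∑ i, aa i * α (zz i)) * f l₀ w₁ = 0 := by
              rw [← hcomb k' zz aa (f l₀) (f l₀ w₁)]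
              have : ∀ i, aa i * (f l₀ (zz i) - α (zz i) * f l₀ w₁) = 0 := fun i => by
                rw [hαkey]; ring
              simp [this]
            linear_combination this
          rw [hzero] at hmain
          simp only [map_zero, zero_add] at hmain
          have hrw1 : ∑ i : Fin (k' + 1), (Fin.snoc aa b : Fin (k' + 1) → ℂ) i * g ((Fin.snoc zz w₁ : Fin (k' + 1) → (Fin n → ℂ)) i)
              = ∑ i, aa i * g' (zz i) := by
            rw [hsum g, hg', hcomb k' zz aa g (g w₁), hb]
            ring
          have hrw2 : ∀ l : Fin p,
              ∑ i : Fin (k' + 1), (Fin.snoc aa b : Fin (k' + 1) → ℂ) i * f (l₀.succAbove l) ((Fin.snoc zz w₁ : Fin (k' + 1) → (Fin n → ℂ)) i)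
                = ∑ i, aa i * f' l (zz i) := by
            intro l
            rw [hsum (f (l₀.succAbove l)), hf', hcomb k' zz aa (f (l₀.succAbove l)) _, hb]
            ring
          rw [hrw1] at hmain
          calc Complex.normSq (∑ i, aa i * g' (zz i))
              ≤ ∑ l, Complex.normSq (∑ i : Fin (k' + 1),
                  (Fin.snoc aa b : Fin (k' + 1) → ℂ) i * f (l₀.succAbove l) ((Fin.snoc zz w₁ : Fin (k' + 1) → (Fin n → ℂ)) i)) := hmain
            _ = ∑ l, Complex.normSq (∑ i, aa i * f' l (zz i)) := by
                exact Finset.sum_congr rfl fun l _ => by rw [hrw2 l]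
        have hs : ∑ i, a i * α (z i) = 0 := by
          have heq : ∑ i, a i * α (z i) = (∑ i, a i * f l₀ (z i)) / f l₀ w₁ := by
            rw [Finset.sum_div]
            exact Finset.sum_congr rfl fun i _ => by rw [hα]; ring
          rw [heq, hrel l₀, zero_div]
        have hrel' : ∀ l, ∑ i, a i * f' l (z i) = 0 := by
          intro l
          rw [hf']
          simp only []
          rw [hcomb N z a (f (l₀.succAbove l)) _, hrel _, hs]
          ring
        have h0 := IH k' (by omega) (by omega) f' g' hf'd hg'd H' N z a hrel'
        rw [hg', hcomb N z a g (g w₁), hs] at h0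
        simpa using h0
    · push_neg at hex
      have hg0 : ∀ t, g t = 0 := by
        intro t
        have h1 := point_bound hk f g H t
        simp only [hex] at h1
        simp only [Complex.normSq_zero, Finset.sum_const, smul_zero] at h1
        exact Complex.normSq_eq_zero.mp (le_antisymm h1 (Complex.normSq_nonneg _))
      simp [hg0]

lemma quadId {n s m : ℕ} (h : Fin s → (Fin n → ℂ) → ℂ) (z : Fin m → (Fin n → ℂ))
    (a : Fin m → ℂ) :
    ∑ i, ∑ j, (∑ l, h l (z i) * (starRingEnd ℂ) (h l (z j))) * a i * (starRingEnd ℂ) (a j)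
      = ((∑ l, Complex.normSq (∑ i, a i * h l (z i)) : ℝ) : ℂ) := by
  have key : ∀ l, (∑ i, a i * h l (z i)) * (starRingEnd ℂ) (∑ j, a j * h l (z j))
      = ∑ i, ∑ j, (h l (z i) * (starRingEnd ℂ) (h l (z j))) * a i * (starRingEnd ℂ) (a j) := by
    intro l
    rw [map_sum, Finset.sum_mul_sum]
    refine Finset.sum_congr rfl fun i _ => Finset.sum_congr rfl fun j _ => ?_
    rw [map_mul]
    ring
  calc ∑ i, ∑ j, (∑ l, h l (z i) * (starRingEnd ℂ) (h l (z j))) * a i * (starRingEnd ℂ) (a j)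
      = ∑ i, ∑ j, ∑ l, (h l (z i) * (starRingEnd ℂ) (h l (z j))) * a i * (starRingEnd ℂ) (a j) := by
        refine Finset.sum_congr rfl fun i _ => Finset.sum_congr rfl fun j _ => ?_
        rw [Finset.sum_mul, Finset.sum_mul]
    _ = ∑ i, ∑ l, ∑ j, (h l (z i) * (starRingEnd ℂ) (h l (z j))) * a i * (starRingEnd ℂ) (a j) :=
        Finset.sum_congr rfl fun i _ => Finset.sum_comm
    _ = ∑ l, ∑ i, ∑ j, (h l (z i) * (starRingEnd ℂ) (h l (z j))) * a i * (starRingEnd ℂ) (a j) :=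
        Finset.sum_comm
    _ = ∑ l, (∑ i, a i * h l (z i)) * (starRingEnd ℂ) (∑ j, a j * h l (z j)) :=
        Finset.sum_congr rfl fun l _ => (key l).symm
    _ = ((∑ l, Complex.normSq (∑ i, a i * h l (z i)) : ℝ) : ℂ) := by
        push_cast
        exact Finset.sum_congr rfl fun l _ => Complex.mul_conj _

/-- Corollary 1 (stability): if `R = ‖f‖² − ‖g‖²` with entire components, `p ≤ k`,
and `R ∈ 𝒫_k(ℂⁿ)`, then `R ∈ 𝒫_N(ℂⁿ)` for every positive integer `N`. -/
theorem stmt6 (n p q k : ℕ) (hn : 0 < n) (hp : 0 < p) (hq : 0 < q) (hk : 0 < k)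
    (hpk : p ≤ k)
    (f : Fin p → (Fin n → ℂ) → ℂ) (g : Fin q → (Fin n → ℂ) → ℂ)
    (hf : ∀ i, Differentiable ℂ (f i)) (hg : ∀ j, Differentiable ℂ (g j))
    (R : (Fin n → ℂ) × (Fin n → ℂ) → ℂ)
    (hR : ∀ z w : Fin n → ℂ, R (z, w) =
      ∑ i, f i z * (starRingEnd ℂ) (f i w) - ∑ j, g j z * (starRingEnd ℂ) (g j w))
    (hPk : InP k R) :
    ∀ N : ℕ, 0 < N → InP N R := by
  have formula : ∀ (m : ℕ) (z : Fin m → (Fin n → ℂ)) (a : Fin m → ℂ),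
      ∑ i, ∑ j, R (z i, z j) * a i * (starRingEnd ℂ) (a j)
        = ((∑ l, Complex.normSq (∑ i, a i * f l (z i))
            - ∑ mm, Complex.normSq (∑ i, a i * g mm (z i)) : ℝ) : ℂ) := by
    intro m z a
    have step : ∑ i, ∑ j, R (z i, z j) * a i * (starRingEnd ℂ) (a j)
        = (∑ i, ∑ j, (∑ l, f l (z i) * (starRingEnd ℂ) (f l (z j))) * a i * (starRingEnd ℂ) (a j))
          - ∑ i, ∑ j, (∑ mm, g mm (z i) * (starRingEnd ℂ) (g mm (z j))) * a i
              * (starRingEnd ℂ) (a j) := by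
      rw [← Finset.sum_sub_distrib]
      refine Finset.sum_congr rfl fun i _ => ?_
      rw [← Finset.sum_sub_distrib]
      refine Finset.sum_congr rfl fun j _ => ?_
      rw [hR]
      ring
    rw [step, quadId f z a, quadId g z a]
    push_cast
    ring
  have hH : ∀ (mm : Fin q) (zz : Fin k → (Fin n → ℂ)) (aa : Fin k → ℂ),
      Complex.normSq (∑ i, aa i * g mm (zz i))
        ≤ ∑ l, Complex.normSq (∑ i, aa i * f l (zz i)) := by
    intro mm zz aa
    have h0 := hPk zz aa
    rw [formula k zz aa, Complex.zero_le_real, sub_nonneg] at h0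
    refine le_trans ?_ h0
    exact Finset.single_le_sum (f := fun mm => Complex.normSq (∑ i, aa i * g mm (zz i)))
      (fun i _ => Complex.normSq_nonneg _) (Finset.mem_univ mm)
  intro N hN z a
  rw [formula N z a, Complex.zero_le_real, sub_nonneg]
  -- the vector of coefficient sums
  set Φ : (Fin n → ℂ) → (Fin p → ℂ) := fun t l => f l t with hΦ
  set u : Fin p → ℂ := fun l => ∑ i, a i * f l (z i) with hu
  have hu_mem : u ∈ Submodule.span ℂ (Set.range Φ) := by
    have hrepr : u = ∑ i, a i • Φ (z i) := by
      funext l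
      rw [Finset.sum_apply]
      exact Finset.sum_congr rfl fun i _ => rfl
    rw [hrepr]
    exact Submodule.sum_mem _ fun i _ =>
      Submodule.smul_mem _ _ (Submodule.subset_span ⟨z i, rfl⟩)
  obtain ⟨t, hts, hsp, hli⟩ := exists_linearIndependent ℂ (Set.range Φ)
  have htfin : t.Finite := hli.setFinite
  haveI : Fintype t := htfin.fintype
  set D := Fintype.card t with hD
  set e : Fin D ≃ t := (Fintype.equivFin t).symm with he
  set v : Fin D → (Fin p → ℂ) := fun j => ((e j : t) : Fin p → ℂ) with hv
  have hrange : Set.range v = t := by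
    rw [hv]
    have : (fun j => ((e j : t) : Fin p → ℂ)) = Subtype.val ∘ e := rfl
    rw [this, Set.range_comp, Equiv.range_eq_univ, Set.image_univ, Subtype.range_coe]
  have hliv : LinearIndependent ℂ v := hli.comp e e.injective
  have hDp : D ≤ p := by
    have h1 := hliv.fintype_card_le_finrank
    simpa [Module.finrank_fin_fun] using h1
  have hDk : D ≤ k := le_trans hDp hpk
  have humem2 : u ∈ Submodule.span ℂ (Set.range v) := by
    rw [hrange, hsp]
    exact hu_mem
  obtain ⟨c, hc⟩ := (Submodule.mem_span_range_iff_exists_fun ℂ).mp humem2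
  have hvmem : ∀ j, v j ∈ Set.range Φ := fun j => hts (by rw [← hrange]; exact Set.mem_range_self j)
  choose w hw using hvmem
  have hcw : ∀ l, ∑ j, c j * f l (w j) = u l := by
    intro l
    have := congrFun hc l
    rw [Finset.sum_apply] at this
    rw [← this]
    refine Finset.sum_congr rfl fun j _ => ?_
    rw [Pi.smul_apply, smul_eq_mul, ← hw j]
  obtain ⟨D', rfl⟩ : ∃ D', k = D + D' := ⟨k - D, by omega⟩
  set wv : Fin (D + D') → (Fin n → ℂ) := Fin.append w (fun _ => 0) with hwv
  set b : Fin (D + D') → ℂ := Fin.append c (fun _ => 0) with hb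
  have happ : ∀ h : (Fin n → ℂ) → ℂ, ∑ i, b i * h (wv i) = ∑ j, c j * h (w j) := by
    intro h
    rw [hb, hwv, Fin.sum_univ_add]
    simp [Fin.append_left, Fin.append_right]
  have hwu : ∀ l, ∑ i, b i * f l (wv i) = u l := fun l => by rw [happ]; exact hcw l
  -- the combined null relation
  have hsplit : ∀ h : (Fin n → ℂ) → ℂ,
      ∑ i : Fin (N + (D + D')), (Fin.append a (fun i => -b i) : Fin (N + (D + D')) → ℂ) i
          * h ((Fin.append z wv : Fin (N + (D + D')) → (Fin n → ℂ)) i)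
        = (∑ i, a i * h (z i)) - ∑ i, b i * h (wv i) := by
    intro h
    rw [Fin.sum_univ_add]
    simp only [Fin.append_left, Fin.append_right, neg_mul]
    rw [Finset.sum_neg_distrib, sub_eq_add_neg]
  have hrelc : ∀ l, ∑ i : Fin (N + (D + D')),
      (Fin.append a (fun i => -b i) : Fin (N + (D + D')) → ℂ) i
        * f l ((Fin.append z wv : Fin (N + (D + D')) → (Fin n → ℂ)) i) = 0 := by
    intro l
    rw [hsplit (f l), hwu l, hu]
    exact sub_self _
  have hgm : ∀ mm, ∑ i, a i * g mm (z i) = ∑ i, b i * g mm (wv i) := by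
    intro mm
    have h0 := club p (D + D') hk hpk f (g mm) hf (hg mm) (hH mm) (N + (D + D'))
      (Fin.append z wv) (Fin.append a (fun i => -b i)) hrelc
    rw [hsplit (g mm)] at h0
    exact sub_eq_zero.mp h0
  calc ∑ mm, Complex.normSq (∑ i, a i * g mm (z i))
      = ∑ mm, Complex.normSq (∑ i, b i * g mm (wv i)) :=
        Finset.sum_congr rfl fun mm _ => by rw [hgm mm]
    _ ≤ ∑ l, Complex.normSq (∑ i, b i * f l (wv i)) := by
        have h0 := hPk wv b
        rw [formula _ wv b, Complex.zero_le_real, sub_nonneg] at h0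
        exact h0
    _ = ∑ l, Complex.normSq (u l) := Finset.sum_congr rfl fun l _ => by rw [hwu l]
    _ = ∑ l, Complex.normSq (∑ i, a i * f l (z i)) :=
        Finset.sum_congr rfl fun l _ => by rw [hu]
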